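/- For every integer b ≥ 1 and all integers g₁, …, g_b ≥ 0 there exists a connected open Feynman graph L of the φ₃⁴-theory whose boundary graph ∂L has exactly b connected components, the i-th component being isomorphic, as a vertex-bipartite edge-3-colored graph, to the canonical genus-g_i graph C_{g_i}. (This is the combinatorial content of the theorem that every closed orientable, possibly disconnected, surface is the boundary of a 3-dimensional space triangulated by a connected Feynman graph of the φ₃⁴-theory; in particular any two closed orientable surfaces are cobordant via such a graph.) -/

import Mathlib

/-!  Open colored graphs. -/

/-- An open `(D+1)`-colored graph with colors `{0,1,…,D}`: finite sets `W` (white) and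
`B` (black) of vertices, bijections `σ c : W ≃ B` for the colors `c = 1,…,D` (indexed by
`Fin D`), and color-0 data: subsets `W₀ ⊆ W` and `B₀ ⊆ B` and a map `σ₀` which (for a
proper graph, see `OGraph.IsProper`) restricts to a bijection from `W₀` onto `B₀`; the
color-0 edges are the pairs `(w, σ₀ w)` with `w ∈ W₀`.  The vertices outside `W₀ ∪ B₀`
are the external vertices. -/
structure OGraph (D : ℕ) where
  W : Type
  B : Type
  finW : Finite W
  finB : Finite B
  σ : Fin D → W ≃ B
  W₀ : Set W
  B₀ : Set B
  σ₀ : W → B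

namespace OGraph

variable {D : ℕ}

/-- The color-0 data is a bijection from `W₀` onto `B₀`. -/
def IsProper (G : OGraph D) : Prop := Set.BijOn G.σ₀ G.W₀ G.B₀

/-- A closed graph is an open graph with no external vertices. -/
def IsClosed (G : OGraph D) : Prop := G.W₀ = Set.univ ∧ G.B₀ = Set.univ

/-- One step along a (0c)-bicolored path: from the white vertex `w` walk along the
color-`c` edge to `σ_c w` and then back along a color-0 edge to the white vertex `w'`. -/
def Step (G : OGraph D) (c : Fin D) (w w' : G.W) : Prop :=
  w' ∈ G.W₀ ∧ G.σ c w ∈ G.B₀ ∧ G.σ₀ w' = G.σ c w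

/-- Boundary adjacency (the color-`c` edges of the boundary graph `∂G`): the external
vertices `w` and `b` are the two endpoints of a maximal (0c)-bicolored path of `G`. -/
def BdryAdj (G : OGraph D) (c : Fin D) (w : G.W) (b : G.B) : Prop :=
  w ∉ G.W₀ ∧ b ∉ G.B₀ ∧
    ∃ w' : G.W, Relation.ReflTransGen (G.Step c) w w' ∧ G.σ c w' = b

/-- Adjacency of vertices of an open colored graph (an edge of any color joins them). -/
def Adj (G : OGraph D) : G.W ⊕ G.B → G.W ⊕ G.B → Prop
  | Sum.inl w, Sum.inr b => (∃ c, G.σ c w = b) ∨ (w ∈ G.W₀ ∧ G.σ₀ w = b)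
  | Sum.inr b, Sum.inl w => (∃ c, G.σ c w = b) ∨ (w ∈ G.W₀ ∧ G.σ₀ w = b)
  | Sum.inl _, Sum.inl _ => False
  | Sum.inr _, Sum.inr _ => False

/-- A graph is connected if any two of its vertices are joined by a path of edges. -/
def Connected (G : OGraph D) : Prop :=
  ∀ x y : G.W ⊕ G.B, Relation.ReflTransGen G.Adj x y

/-- An open 4-colored graph (colors `{0,1,2,3}`; the colors `1,2,3` are indexed by
`Fin 3`) is a Feynman graph of the φ₃⁴-theory iff every connected component of the
3-colored graph obtained by deleting all color-0 edges is one of the quartic vertices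
`V₁, V₂, V₃`: the white vertices pair up, `w` with a partner `w' ≠ w`, so that for some
color `i` the two edges at `w` of the colors `j ≠ i` end at the same black vertex as the
color-`i` edge of `w'`, and vice versa. -/
def Phi34 (G : OGraph 3) : Prop :=
  ∀ w : G.W, ∃ i : Fin 3, ∃ w' : G.W, w' ≠ w ∧
    (∀ j : Fin 3, j ≠ i → G.σ j w = G.σ i w') ∧
    (∀ j : Fin 3, j ≠ i → G.σ j w' = G.σ i w)

/-- Connected sum of two open `(D+1)`-colored graphs along the color-0 edges
`(wg, σ₀ wg)` of `G` and `(wh, σ₀ wh)` of `H`: delete the two edges and add the color-0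
edges `(wg, H.σ₀ wh)` and `(wh, G.σ₀ wg)`; all other edges are kept. -/
noncomputable def connSum0 (G H : OGraph D) (wg : G.W) (wh : H.W) : OGraph D where
  W := G.W ⊕ H.W
  B := G.B ⊕ H.B
  finW := by haveI := G.finW; haveI := H.finW; exact inferInstance
  finB := by haveI := G.finB; haveI := H.finB; exact inferInstance
  σ := fun c => (G.σ c).sumCongr (H.σ c)
  W₀ := Sum.inl '' G.W₀ ∪ Sum.inr '' H.W₀
  B₀ := Sum.inl '' G.B₀ ∪ Sum.inr '' H.B₀
  σ₀ := fun x =>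
    letI : DecidableEq (G.W ⊕ H.W) := Classical.decEq _
    if x = Sum.inl wg then Sum.inr (H.σ₀ wh)
    else if x = Sum.inr wh then Sum.inl (G.σ₀ wg)
    else Sum.map G.σ₀ H.σ₀ x

end OGraph

/-- The color-`c` bijection (white `i` ↦ black vertex) of the canonical genus-`g`
graph `C_g`: its vertices are indexed by `ℤ/(2g+1)`, the color-1 edges are `w_i b_i`,
the color-2 edges are `w_i b_{i−1}`, and the color-3 edges are `w_i b_{i+g}`
(colors `1,2,3` indexed by `Fin 3` as `0 ↦ 1`, `1 ↦ 2`, `2 ↦ 3`). -/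
def canonicalσ (g : ℕ) (c : Fin 3) : ZMod (2 * g + 1) ≃ ZMod (2 * g + 1) :=
  if c = 0 then Equiv.refl _
  else if c = 1 then Equiv.subRight (1 : ZMod (2 * g + 1))
  else Equiv.addRight (g : ZMod (2 * g + 1))

namespace Phi34Conn

def p4 : Fin 3 → Equiv.Perm (Fin 4)
  | 0 => 1
  | 1 => Equiv.swap 0 1 * Equiv.swap 2 3
  | 2 => Equiv.swap 0 1

def p2 : Fin 3 → Equiv.Perm (Fin 2)
  | 0 => Equiv.swap 0 1
  | _ => 1

variable {b : ℕ}

abbrev Vt (g : Fin b → ℕ) : Type := Σ i : Fin b, (Fin 4 × ZMod (2 * g i + 1)) ⊕ Fin 2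

variable (g : Fin b → ℕ)

def sV (c : Fin 3) (i : Fin b) :
    ((Fin 4 × ZMod (2 * g i + 1)) ⊕ Fin 2) ≃ ((Fin 4 × ZMod (2 * g i + 1)) ⊕ Fin 2) :=
  Equiv.sumCongr (Equiv.prodCongr (p4 c) (Equiv.refl _)) (p2 c)

def sig (c : Fin 3) : Vt g ≃ Vt g := Equiv.sigmaCongrRight (sV g c)

@[simp] lemma sig_inl (c : Fin 3) (i : Fin b) (l : Fin 4) (k : ZMod (2 * g i + 1)) :
    sig g c ⟨i, Sum.inl (l, k)⟩ = ⟨i, Sum.inl (p4 c l, k)⟩ := rfl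

@[simp] lemma sig_inr (c : Fin 3) (i : Fin b) (t : Fin 2) :
    sig g c ⟨i, Sum.inr t⟩ = ⟨i, Sum.inr (p2 c t)⟩ := rfl

def intSet : Set (Vt g) := {x | ∀ k, x.2 ≠ Sum.inl (0, k)}

lemma not_mem_intSet {x : Vt g} : x ∉ intSet g ↔ ∃ k, x.2 = Sum.inl (0, k) := by
  simp [intSet]

lemma not_mem_intSet' {i : Fin b} {x : (Fin 4 × ZMod (2 * g i + 1)) ⊕ Fin 2} :
    (⟨i, x⟩ : Vt g) ∉ intSet g ↔ ∃ k : ZMod (2 * g i + 1), x = Sum.inl (0, k) :=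
  not_mem_intSet g

@[simp] lemma mem_intSet_inl (i : Fin b) (l : Fin 4) (k : ZMod (2 * g i + 1)) :
    (⟨i, Sum.inl (l, k)⟩ : Vt g) ∈ intSet g ↔ l ≠ 0 := by
  constructor
  · intro h hl; exact h k (by simp [hl])
  · intro hl k' h
    simp only [Sum.inl.injEq, Prod.mk.injEq] at h
    exact hl h.1

@[simp] lemma mem_intSet_inr (i : Fin b) (t : Fin 2) :
    (⟨i, Sum.inr t⟩ : Vt g) ∈ intSet g := by
  intro k h; cases h

def sig0 : Vt g → Vt g := fun x =>
  match x with
  | ⟨i, Sum.inl (l, k)⟩ =>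
    if l = 1 then (if k = 0 then ⟨i, Sum.inr 0⟩ else ⟨i, Sum.inl (3, k + 1)⟩)
    else if l = 2 then ⟨i, Sum.inl (1, k)⟩
    else if l = 3 then ⟨i, Sum.inl (2, k - g i - 1)⟩
    else ⟨i, Sum.inl (0, k)⟩
  | ⟨i, Sum.inr t⟩ =>
    if t = 0 then ⟨i, Sum.inl (3, 1)⟩ else ⟨finRotate b i, Sum.inr 1⟩

def tau : Vt g → Vt g := fun x =>
  match x with
  | ⟨i, Sum.inl (l, k)⟩ =>
    if l = 1 then ⟨i, Sum.inl (2, k)⟩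
    else if l = 2 then ⟨i, Sum.inl (3, k + g i + 1)⟩
    else if l = 3 then (if k = 1 then ⟨i, Sum.inr 0⟩ else ⟨i, Sum.inl (1, k - 1)⟩)
    else ⟨i, Sum.inl (0, k)⟩
  | ⟨i, Sum.inr t⟩ =>
    if t = 0 then ⟨i, Sum.inl (1, 0)⟩ else ⟨(finRotate b).symm i, Sum.inr 1⟩


@[simp] lemma sig0_w (i : Fin b) (k) : sig0 g ⟨i, Sum.inl (0, k)⟩ = ⟨i, Sum.inl (0, k)⟩ := rfl
@[simp] lemma sig0_u (i : Fin b) (k) : sig0 g ⟨i, Sum.inl (1, k)⟩ =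
    if k = 0 then ⟨i, Sum.inr 0⟩ else ⟨i, Sum.inl (3, k + 1)⟩ := rfl
@[simp] lemma sig0_p (i : Fin b) (k) : sig0 g ⟨i, Sum.inl (2, k)⟩ = ⟨i, Sum.inl (1, k)⟩ := rfl
@[simp] lemma sig0_q (i : Fin b) (k) : sig0 g ⟨i, Sum.inl (3, k)⟩ = ⟨i, Sum.inl (2, k - g i - 1)⟩ := rfl
@[simp] lemma sig0_m (i : Fin b) : sig0 g ⟨i, Sum.inr 0⟩ = ⟨i, Sum.inl (3, 1)⟩ := rfl
@[simp] lemma sig0_n (i : Fin b) : sig0 g ⟨i, Sum.inr 1⟩ = ⟨finRotate b i, Sum.inr 1⟩ := rfl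

@[simp] lemma tau_b (i : Fin b) (k) : tau g ⟨i, Sum.inl (0, k)⟩ = ⟨i, Sum.inl (0, k)⟩ := rfl
@[simp] lemma tau_x (i : Fin b) (k) : tau g ⟨i, Sum.inl (1, k)⟩ = ⟨i, Sum.inl (2, k)⟩ := rfl
@[simp] lemma tau_r (i : Fin b) (k) : tau g ⟨i, Sum.inl (2, k)⟩ = ⟨i, Sum.inl (3, k + g i + 1)⟩ := rfl
@[simp] lemma tau_s (i : Fin b) (k) : tau g ⟨i, Sum.inl (3, k)⟩ =
    if k = 1 then ⟨i, Sum.inr 0⟩ else ⟨i, Sum.inl (1, k - 1)⟩ := rfl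
@[simp] lemma tau_y (i : Fin b) : tau g ⟨i, Sum.inr 0⟩ = ⟨i, Sum.inl (1, 0)⟩ := rfl
@[simp] lemma tau_z (i : Fin b) : tau g ⟨i, Sum.inr 1⟩ = ⟨(finRotate b).symm i, Sum.inr 1⟩ := rfl

lemma fin4_cases (l : Fin 4) : l = 0 ∨ l = 1 ∨ l = 2 ∨ l = 3 := by revert l; decide
lemma fin2_cases (t : Fin 2) : t = 0 ∨ t = 1 := by revert t; decide
lemma fin3_cases (c : Fin 3) : c = 0 ∨ c = 1 ∨ c = 2 := by revert c; decide

lemma tau_mem {x : Vt g} (hx : x ∈ intSet g) : tau g x ∈ intSet g := by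
  obtain ⟨i, xx⟩ := x
  rcases xx with ⟨l, k⟩ | t
  · rcases fin4_cases l with rfl | rfl | rfl | rfl
    · exact absurd rfl ((mem_intSet_inl g i 0 k).mp hx)
    · simp
    · simp
    · by_cases hk : k = 1 <;> simp [hk]
  · rcases fin2_cases t with rfl | rfl <;> simp

lemma sig0_mem {x : Vt g} (hx : x ∈ intSet g) : sig0 g x ∈ intSet g := by
  obtain ⟨i, xx⟩ := x
  rcases xx with ⟨l, k⟩ | t
  · rcases fin4_cases l with rfl | rfl | rfl | rfl
    · exact absurd rfl ((mem_intSet_inl g i 0 k).mp hx)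
    · by_cases hk : k = 0 <;> simp [hk]
    · simp
    · simp
  · rcases fin2_cases t with rfl | rfl <;> simp

lemma tau_sig0 {x : Vt g} (hx : x ∈ intSet g) : tau g (sig0 g x) = x := by
  obtain ⟨i, xx⟩ := x
  rcases xx with ⟨l, k⟩ | t
  · rcases fin4_cases l with rfl | rfl | rfl | rfl
    · exact absurd rfl ((mem_intSet_inl g i 0 k).mp hx)
    · by_cases hk : k = 0
      · simp [hk]
      · have h1 : ¬ (k + 1 = 1) := by
          simpa [add_eq_right] using hk
        simp [hk, h1]
    · simp
    · have : k - g i - 1 + g i + 1 = k := by ring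
      simp [this]
  · rcases fin2_cases t with rfl | rfl
    · simp
    · simp only [sig0_n, tau_z]
      exact congrArg (fun j : Fin b => (⟨j, Sum.inr 1⟩ : Vt g)) (Equiv.symm_apply_apply _ _)

lemma sig0_tau {x : Vt g} (hx : x ∈ intSet g) : sig0 g (tau g x) = x := by
  obtain ⟨i, xx⟩ := x
  rcases xx with ⟨l, k⟩ | t
  · rcases fin4_cases l with rfl | rfl | rfl | rfl
    · exact absurd rfl ((mem_intSet_inl g i 0 k).mp hx)
    · simp
    · have : k + g i + 1 - g i - 1 = k := by ring
      simp [this]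
    · by_cases hk : k = 1
      · simp [hk]
      · have h1 : ¬ (k - 1 = 0) := by
          simpa [sub_eq_zero] using hk
        have h2 : k - 1 + 1 = k := by ring
        simp [hk, h1, h2]
  · rcases fin2_cases t with rfl | rfl
    · simp
    · simp only [tau_z, sig0_n]
      exact congrArg (fun j : Fin b => (⟨j, Sum.inr 1⟩ : Vt g)) (Equiv.apply_symm_apply _ _)


@[simp] lemma p4_0 (l : Fin 4) : p4 0 l = l := rfl
@[simp] lemma p4_1_0 : p4 1 0 = 1 := by decide
@[simp] lemma p4_1_1 : p4 1 1 = 0 := by decide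
@[simp] lemma p4_1_2 : p4 1 2 = 3 := by decide
@[simp] lemma p4_1_3 : p4 1 3 = 2 := by decide
@[simp] lemma p4_2_0 : p4 2 0 = 1 := by decide
@[simp] lemma p4_2_1 : p4 2 1 = 0 := by decide
@[simp] lemma p4_2_2 : p4 2 2 = 2 := by decide
@[simp] lemma p4_2_3 : p4 2 3 = 3 := by decide
@[simp] lemma p2_0_0 : p2 0 0 = 1 := by decide
@[simp] lemma p2_0_1 : p2 0 1 = 0 := by decide
@[simp] lemma p2_1 (t : Fin 2) : p2 1 t = t := rfl
@[simp] lemma p2_2 (t : Fin 2) : p2 2 t = t := rfl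

def L : OGraph 3 where
  W := Vt g
  B := Vt g
  finW := inferInstance
  finB := inferInstance
  σ := sig g
  W₀ := intSet g
  B₀ := intSet g
  σ₀ := sig0 g

@[simp] lemma L_W : (L g).W = Vt g := rfl
@[simp] lemma L_B : (L g).B = Vt g := rfl
@[simp] lemma L_sigma (c : Fin 3) : (L g).σ c = sig g c := rfl
@[simp] lemma L_W0 : (L g).W₀ = intSet g := rfl
@[simp] lemma L_B0 : (L g).B₀ = intSet g := rfl
@[simp] lemma L_sig0 : (L g).σ₀ = sig0 g := rfl

lemma L_isProper : (L g).IsProper :=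
  ⟨fun _ hx => sig0_mem g hx,
   fun x hx y hy h => by
     have h' : sig0 g x = sig0 g y := h
     exact (tau_sig0 g hx).symm.trans ((congrArg (tau g) h').trans (tau_sig0 g hy)),
   fun y hy => ⟨tau g y, tau_mem g hy, sig0_tau g hy⟩⟩

lemma L_phi34 : (L g).Phi34 := by
  rintro ⟨i, xx⟩
  rcases xx with ⟨l, k⟩ | t
  · rcases fin4_cases l with rfl | rfl | rfl | rfl
    · exact ⟨0, ⟨i, Sum.inl (1, k)⟩, by simp, by
        intro j hj; rcases fin3_cases j with rfl|rfl|rfl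
        · exact absurd rfl hj
        · rfl
        · rfl, by
        intro j hj; rcases fin3_cases j with rfl|rfl|rfl
        · exact absurd rfl hj
        · rfl
        · rfl⟩
    · exact ⟨0, ⟨i, Sum.inl (0, k)⟩, by simp, by
        intro j hj; rcases fin3_cases j with rfl|rfl|rfl
        · exact absurd rfl hj
        · rfl
        · rfl, by
        intro j hj; rcases fin3_cases j with rfl|rfl|rfl
        · exact absurd rfl hj
        · rfl
        · rfl⟩
    · exact ⟨1, ⟨i, Sum.inl (3, k)⟩, by simp, by
        intro j hj; rcases fin3_cases j with rfl|rfl|rfl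
        · rfl
        · exact absurd rfl hj
        · rfl, by
        intro j hj; rcases fin3_cases j with rfl|rfl|rfl
        · rfl
        · exact absurd rfl hj
        · rfl⟩
    · exact ⟨1, ⟨i, Sum.inl (2, k)⟩, by simp, by
        intro j hj; rcases fin3_cases j with rfl|rfl|rfl
        · rfl
        · exact absurd rfl hj
        · rfl, by
        intro j hj; rcases fin3_cases j with rfl|rfl|rfl
        · rfl
        · exact absurd rfl hj
        · rfl⟩
  · rcases fin2_cases t with rfl | rfl
    · exact ⟨0, ⟨i, Sum.inr 1⟩, by simp, by
        intro j hj; rcases fin3_cases j with rfl|rfl|rfl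
        · exact absurd rfl hj
        · rfl
        · rfl, by
        intro j hj; rcases fin3_cases j with rfl|rfl|rfl
        · exact absurd rfl hj
        · rfl
        · rfl⟩
    · exact ⟨0, ⟨i, Sum.inr 0⟩, by simp, by
        intro j hj; rcases fin3_cases j with rfl|rfl|rfl
        · exact absurd rfl hj
        · rfl
        · rfl, by
        intro j hj; rcases fin3_cases j with rfl|rfl|rfl
        · exact absurd rfl hj
        · rfl
        · rfl⟩


lemma step_iff (c : Fin 3) (x y : Vt g) :
    (L g).Step c x y ↔ sig g c x ∈ intSet g ∧ y = tau g (sig g c x) := by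
  constructor
  · rintro ⟨hy, hm, he⟩
    have hm' : sig g c x ∈ intSet g := hm
    have he' : sig0 g y = sig g c x := he
    refine ⟨hm', ?_⟩
    rw [← he']
    exact (tau_sig0 g hy).symm
  · rintro ⟨hm, rfl⟩
    exact ⟨tau_mem g hm, hm, sig0_tau g hm⟩

lemma step_det (c : Fin 3) : ∀ ⦃x y z : Vt g⦄, (L g).Step c x y → (L g).Step c x z → y = z := by
  intro x y z h1 h2
  rw [step_iff] at h1 h2
  rw [h1.2, h2.2]

lemma rtg_unique {α : Type*} {r : α → α → Prop} (det : ∀ ⦃x y z⦄, r x y → r x z → y = z)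
    {u v : α} (tu : ∀ x, ¬ r u x) (tv : ∀ x, ¬ r v x) :
    ∀ {a : α}, Relation.ReflTransGen r a u → Relation.ReflTransGen r a v → u = v := by
  intro a hu
  induction hu using Relation.ReflTransGen.head_induction_on with
  | refl =>
    intro hv
    rcases Relation.ReflTransGen.cases_head hv with rfl | ⟨c, hc, -⟩
    · rfl
    · exact absurd hc (tu c)
  | head h' hcu ih =>
    intro hv
    rcases Relation.ReflTransGen.cases_head hv with rfl | ⟨c', hc', hcv⟩
    · exact absurd h' (tv _)
    · have : _ = c' := det h' hc'
      rw [← this] at hcv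
      exact ih hcv

def endB (c : Fin 3) (i : Fin b) (k : ZMod (2 * g i + 1)) : ZMod (2 * g i + 1) :=
  if c = 0 then k else if c = 1 then k - 1 else k + g i

lemma endB_canonical (c : Fin 3) (i : Fin b) (k : ZMod (2 * g i + 1)) :
    endB g c i k = canonicalσ (g i) c k := by
  rcases fin3_cases c with rfl | rfl | rfl <;> simp [endB, canonicalσ]

lemma chain (c : Fin 3) (i : Fin b) (k : ZMod (2 * g i + 1)) :
    ∃ w' : Vt g, Relation.ReflTransGen ((L g).Step c) ⟨i, Sum.inl (0, k)⟩ w' ∧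
      sig g c w' = ⟨i, Sum.inl (0, endB g c i k)⟩ := by
  rcases fin3_cases c with rfl | rfl | rfl
  · exact ⟨⟨i, Sum.inl (0, k)⟩, .refl, by simp [endB]⟩
  · have s1 : (L g).Step 1 ⟨i, Sum.inl (0, k)⟩ ⟨i, Sum.inl (2, k)⟩ := by
      rw [step_iff]; exact ⟨by simp, by simp⟩
    by_cases hk : k = 1
    · subst hk
      have s2 : (L g).Step 1 ⟨i, Sum.inl (2, 1)⟩ ⟨i, Sum.inr 0⟩ := by
        rw [step_iff]; exact ⟨by simp, by simp⟩
      have s3 : (L g).Step 1 ⟨i, Sum.inr 0⟩ ⟨i, Sum.inl (1, 0)⟩ := by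
        rw [step_iff]; exact ⟨by simp, by simp⟩
      refine ⟨⟨i, Sum.inl (1, 0)⟩, ((Relation.ReflTransGen.single s1).tail s2).tail s3, ?_⟩
      simp [endB]
    · have s2 : (L g).Step 1 ⟨i, Sum.inl (2, k)⟩ ⟨i, Sum.inl (1, k - 1)⟩ := by
        rw [step_iff]; exact ⟨by simp, by simp [hk]⟩
      refine ⟨⟨i, Sum.inl (1, k - 1)⟩, (Relation.ReflTransGen.single s1).tail s2, ?_⟩
      simp [endB]
  · have s1 : (L g).Step 2 ⟨i, Sum.inl (0, k)⟩ ⟨i, Sum.inl (2, k)⟩ := by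
      rw [step_iff]; exact ⟨by simp, by simp⟩
    have s2 : (L g).Step 2 ⟨i, Sum.inl (2, k)⟩ ⟨i, Sum.inl (3, k + g i + 1)⟩ := by
      rw [step_iff]; exact ⟨by simp, by simp⟩
    by_cases hk : k + (g i : ZMod (2 * g i + 1)) + 1 = 1
    · have hk0 : k + (g i : ZMod (2 * g i + 1)) = 0 := by
        have := hk
        rwa [add_eq_right] at this
      have s3 : (L g).Step 2 ⟨i, Sum.inl (3, k + g i + 1)⟩ ⟨i, Sum.inr 0⟩ := by
        rw [step_iff]; exact ⟨by simp, by simp [hk]⟩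
      have s4 : (L g).Step 2 ⟨i, Sum.inr 0⟩ ⟨i, Sum.inl (1, 0)⟩ := by
        rw [step_iff]; exact ⟨by simp, by simp⟩
      refine ⟨⟨i, Sum.inl (1, 0)⟩,
        (((Relation.ReflTransGen.single s1).tail s2).tail s3).tail s4, ?_⟩
      simp [endB, hk0]
    · have s3 : (L g).Step 2 ⟨i, Sum.inl (3, k + g i + 1)⟩ ⟨i, Sum.inl (1, k + g i)⟩ := by
        rw [step_iff]
        refine ⟨by simp, by simp [hk, add_sub_cancel_right]⟩
      refine ⟨⟨i, Sum.inl (1, k + g i)⟩,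
        ((Relation.ReflTransGen.single s1).tail s2).tail s3, ?_⟩
      simp [endB]

lemma bdryAdj_iff (c : Fin 3) (i : Fin b) (k : ZMod (2 * g i + 1)) (v : Vt g)
    (hv : v ∉ intSet g) :
    (L g).BdryAdj c ⟨i, Sum.inl (0, k)⟩ v ↔ v = ⟨i, Sum.inl (0, endB g c i k)⟩ := by
  obtain ⟨w', hrtg, hend⟩ := chain g c i k
  constructor
  · rintro ⟨-, -, u, hu, hσ⟩
    have tu : ∀ x, ¬ (L g).Step c u x := by
      rintro x ⟨-, hm, -⟩
      have hm' : sig g c u ∈ intSet g := hm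
      have hσ' : sig g c u = v := hσ
      rw [hσ'] at hm'
      exact hv hm'
    have tw : ∀ x, ¬ (L g).Step c w' x := by
      rintro x ⟨-, hm, -⟩
      have hm' : sig g c w' ∈ intSet g := hm
      rw [hend] at hm'
      exact (mem_intSet_inl g i 0 _).mp hm' rfl
    have huw : u = w' := rtg_unique (step_det g c) tu tw hu hrtg
    have hσ' : sig g c u = v := hσ
    rw [huw, hend] at hσ'
    exact hσ'.symm
  · rintro rfl
    refine ⟨?_, ?_, w', hrtg, hend⟩
    · show (⟨i, Sum.inl (0, k)⟩ : Vt g) ∉ intSet g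
      rw [not_mem_intSet]; exact ⟨k, rfl⟩
    · exact hv


abbrev RR (g : Fin b → ℕ) := Relation.ReflTransGen ((L g).Adj)

lemma adjL {x y : Vt g} (c : Fin 3) (h : sig g c x = y) :
    (L g).Adj (Sum.inl x) (Sum.inr y) := Or.inl ⟨c, h⟩

lemma adjL0 {x y : Vt g} (hx : x ∈ intSet g) (h : sig0 g x = y) :
    (L g).Adj (Sum.inl x) (Sum.inr y) := Or.inr ⟨hx, h⟩

lemma adj_symmL : ∀ {x y : (L g).W ⊕ (L g).B}, (L g).Adj x y → (L g).Adj y x := by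
  rintro (x|x) (y|y) h <;> exact h

lemma rsymm {x y} (h : RR g x y) : RR g y x :=
  haveI : Std.Symm (L g).Adj := ⟨fun _ _ hh => adj_symmL g hh⟩
  Std.Symm.symm _ _ h

lemma hop {x z : Vt g} (yb : Vt g) (h1 : (L g).Adj (Sum.inl x) (Sum.inr yb))
    (h2 : (L g).Adj (Sum.inl z) (Sum.inr yb)) : RR g (Sum.inl x) (Sum.inl z) :=
  (Relation.ReflTransGen.single h1).trans
    (Relation.ReflTransGen.single (adj_symmL g h2))

def Y (i : Fin b) : (L g).W ⊕ (L g).B := Sum.inr ⟨i, Sum.inr 0⟩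

lemma conn_u (i : Fin b) : ∀ j : ℕ,
    RR g (Sum.inl ⟨i, Sum.inl (1, ((j : ℕ) : ZMod (2 * g i + 1)))⟩) (Y g i)
  | 0 => by
    apply Relation.ReflTransGen.single
    apply adjL0 g (by simp)
    simp
  | (j+1) => by
    set kk : ZMod (2 * g i + 1) := ((j : ℕ) : ZMod (2 * g i + 1)) with hkk
    have hc : (((j+1 : ℕ)) : ZMod (2 * g i + 1)) = kk + 1 := by push_cast; ring
    rw [hc]
    have h1 : RR g (Sum.inl ⟨i, Sum.inl (1, kk + 1)⟩) (Sum.inl ⟨i, Sum.inl (2, kk + 1)⟩) :=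
      hop g ⟨i, Sum.inl (1, kk + 1)⟩ (adjL g 0 (by simp)) (adjL0 g (by simp) (by simp))
    have h2 : RR g (Sum.inl ⟨i, Sum.inl (2, kk + 1)⟩) (Sum.inr ⟨i, Sum.inl (3, kk + 1)⟩) :=
      Relation.ReflTransGen.single (adjL g 1 (by simp))
    by_cases h : kk + 1 = (1 : ZMod (2 * g i + 1))
    · -- through m
      have h3 : (L g).Adj (Sum.inl ⟨i, Sum.inr 0⟩) (Sum.inr ⟨i, Sum.inl (3, kk + 1)⟩) :=
        adjL0 g (by simp) (by rw [h]; simp)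
      have h4 : RR g (Sum.inl ⟨i, Sum.inr 0⟩) (Y g i) :=
        Relation.ReflTransGen.single (adjL g 1 (by simp))
      exact (h1.trans h2).trans
        ((Relation.ReflTransGen.single (adj_symmL g h3)).trans h4)
    · -- through u_kk
      have hk0 : kk ≠ 0 := by
        intro h0; exact h (by rw [h0, zero_add])
      have h3 : (L g).Adj (Sum.inl ⟨i, Sum.inl (1, kk)⟩) (Sum.inr ⟨i, Sum.inl (3, kk + 1)⟩) :=
        adjL0 g (by simp) (by simp [hk0])
      exact (h1.trans h2).trans
        ((Relation.ReflTransGen.single (adj_symmL g h3)).trans (conn_u i j))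

lemma conn_u' (i : Fin b) (k : ZMod (2 * g i + 1)) :
    RR g (Sum.inl ⟨i, Sum.inl (1, k)⟩) (Y g i) := by
  have := conn_u g i k.val
  rwa [ZMod.natCast_rightInverse k] at this

lemma connW (i : Fin b) (x) : RR g (Sum.inl ⟨i, x⟩) (Y g i) := by
  rcases x with ⟨l, k⟩ | t
  · rcases fin4_cases l with rfl | rfl | rfl | rfl
    · exact (hop g ⟨i, Sum.inl (0, k)⟩ (adjL g 0 (by simp)) (adjL g 1 (by simp))).trans
        (conn_u' g i k)
    · exact conn_u' g i k
    · exact (hop g ⟨i, Sum.inl (1, k)⟩ (adjL0 g (by simp) (by simp)) (adjL g 0 (by simp))).trans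
        (conn_u' g i k)
    · refine (hop g ⟨i, Sum.inl (3, k)⟩ (adjL g 0 (by simp))
        (adjL g (x := ⟨i, Sum.inl (2, k)⟩) 1 (by simp))).trans ?_
      exact (hop g ⟨i, Sum.inl (1, k)⟩ (adjL0 g (by simp) (by simp)) (adjL g 0 (by simp))).trans
        (conn_u' g i k)
  · rcases fin2_cases t with rfl | rfl
    · exact Relation.ReflTransGen.single (adjL g 1 (by simp))
    · exact Relation.ReflTransGen.single (adjL g 0 (by simp))

lemma connB (i : Fin b) (x) : RR g (Sum.inr ⟨i, x⟩) (Y g i) := by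
  rcases x with ⟨l, k⟩ | t
  · rcases fin4_cases l with rfl | rfl | rfl | rfl
    · exact (Relation.ReflTransGen.single (adj_symmL g (adjL g 1 (by simp)))).trans
        (conn_u' g i k)
    · exact (Relation.ReflTransGen.single (adj_symmL g (adjL g 0 (by simp)))).trans
        (conn_u' g i k)
    · exact (Relation.ReflTransGen.single
        (adj_symmL g (adjL g (x := ⟨i, Sum.inl (2, k)⟩) 0 (by simp)))).trans
        (connW g i (Sum.inl (2, k)))
    · exact (Relation.ReflTransGen.single
        (adj_symmL g (adjL g (x := ⟨i, Sum.inl (3, k)⟩) 0 (by simp)))).trans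
        (connW g i (Sum.inl (3, k)))
  · rcases fin2_cases t with rfl | rfl
    · exact (Relation.ReflTransGen.single (adj_symmL g (adjL g 1 (by simp)))).trans
        (connW g i (Sum.inr 0))
    · exact (Relation.ReflTransGen.single (adj_symmL g (adjL g 0 (by simp)))).trans
        (connW g i (Sum.inr 0))

lemma connY_rot (i : Fin b) : RR g (Y g i) (Y g (finRotate b i)) := by
  have h1 : RR g (Y g i) (Sum.inl ⟨i, Sum.inr 1⟩) :=
    Relation.ReflTransGen.single (adj_symmL g (adjL g 0 (by simp)))
  have h2 : RR g (Sum.inl ⟨i, Sum.inr 1⟩) (Sum.inr ⟨finRotate b i, Sum.inr 1⟩) :=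
    Relation.ReflTransGen.single (adjL0 g (by simp) (by simp))
  exact (h1.trans h2).trans (connB g (finRotate b i) (Sum.inr 1))

lemma rot_mk {m j : ℕ} (h : j + 1 < m + 1) :
    finRotate (m+1) ⟨j, by omega⟩ = ⟨j+1, h⟩ := by
  ext
  rw [finRotate_succ_apply]
  exact Fin.val_add_one_of_lt (by
    simp only [Fin.lt_iff_val_lt_val, Fin.val_last]
    omega)

lemma connY (hb : 0 < b) (i : Fin b) : RR g (Y g i) (Y g ⟨0, hb⟩) := by
  obtain ⟨m, rfl⟩ : ∃ m, b = m + 1 := ⟨b - 1, by omega⟩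
  obtain ⟨j, hj⟩ := i
  induction j with
  | zero => exact Relation.ReflTransGen.refl
  | succ j ih =>
    have hj' : j < m + 1 := by omega
    have := connY_rot g ⟨j, hj'⟩
    rw [rot_mk hj] at this
    exact (rsymm g this).trans (ih hj')

lemma conn_hub (hb : 0 < b) (z : (L g).W ⊕ (L g).B) : RR g z (Y g ⟨0, hb⟩) := by
  rcases z with ⟨i, x⟩ | ⟨i, x⟩
  · exact (connW g i x).trans (connY g hb i)
  · exact (connB g i x).trans (connY g hb i)

lemma L_connected (hb : 0 < b) : (L g).Connected := fun x y =>
  (conn_hub g hb x).trans (rsymm g (conn_hub g hb y))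


def gk (i : Fin b) : ((Fin 4 × ZMod (2 * g i + 1)) ⊕ Fin 2) → ZMod (2 * g i + 1)
  | Sum.inl (_, k) => k
  | Sum.inr _ => 0

def extE : {x : Vt g // x ∉ intSet g} ≃ Σ i : Fin b, ZMod (2 * g i + 1) where
  toFun x := ⟨x.1.1, gk g x.1.1 x.1.2⟩
  invFun p := ⟨⟨p.1, Sum.inl (0, p.2)⟩, by rw [not_mem_intSet]; exact ⟨p.2, rfl⟩⟩
  left_inv := by
    rintro ⟨⟨i, x⟩, hx⟩
    obtain ⟨k, hk⟩ := (not_mem_intSet' g).mp hx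
    subst hk
    rfl
  right_inv := by rintro ⟨i, k⟩; rfl

lemma sigma_pack (i' i : Fin b) (k' : ZMod (2 * g i' + 1)) (e : ZMod (2 * g i + 1)) :
    (⟨i', Sum.inl (0, k')⟩ : Vt g) = ⟨i, Sum.inl (0, e)⟩ ↔
      (⟨i', k'⟩ : Σ j : Fin b, ZMod (2 * g j + 1)) = ⟨i, e⟩ := by
  constructor
  · intro h
    obtain ⟨hi, h2⟩ := Sigma.mk.inj_iff.mp h
    subst hi
    rw [heq_eq_eq] at h2
    obtain ⟨-, rfl⟩ : (0 : Fin 4) = 0 ∧ k' = e := by simpa using h2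
    rfl
  · intro h
    obtain ⟨hi, h2⟩ := Sigma.mk.inj_iff.mp h
    subst hi
    rw [heq_eq_eq] at h2
    subst h2
    rfl

end Phi34Conn

/-- For every `b ≥ 1` and all `g₁, …, g_b ≥ 0` there exists a connected
open Feynman graph `L` of the φ₃⁴-theory whose boundary graph `∂L` has exactly `b`
connected components, the `i`-th one isomorphic (as a vertex-bipartite edge-3-colored
graph) to the canonical genus-`g_i` graph `C_{g_i}`; i.e. `∂L` is isomorphic to the
disjoint union `C_{g₁} ⊔ ⋯ ⊔ C_{g_b}` (whose vertices on each side are indexed by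
`Σ i : Fin b, ZMod (2 gᵢ + 1)` and whose color-`c` edges are given componentwise by
`canonicalσ`). -/
theorem phi34_boundary_sector_complete (b : ℕ) (hb : 1 ≤ b) (g : Fin b → ℕ) :
    ∃ L : OGraph 3, L.IsProper ∧ L.Phi34 ∧ L.Connected ∧
      ∃ (eW : {w : L.W // w ∉ L.W₀} ≃ Σ i : Fin b, ZMod (2 * g i + 1))
        (eB : {v : L.B // v ∉ L.B₀} ≃ Σ i : Fin b, ZMod (2 * g i + 1)),
        ∀ (c : Fin 3) (w : {w : L.W // w ∉ L.W₀}) (v : {v : L.B // v ∉ L.B₀}),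
          L.BdryAdj c w.1 v.1 ↔
            eB v = ⟨(eW w).1, canonicalσ (g (eW w).1) c (eW w).2⟩ := by
  refine ⟨Phi34Conn.L g, Phi34Conn.L_isProper g, Phi34Conn.L_phi34 g,
    Phi34Conn.L_connected g hb, Phi34Conn.extE g, Phi34Conn.extE g, ?_⟩
  intro c w v
  obtain ⟨⟨i, x⟩, hw⟩ := w
  obtain ⟨⟨i', x'⟩, hv⟩ := v
  have hw' : (⟨i, x⟩ : Phi34Conn.Vt g) ∉ Phi34Conn.intSet g := hw
  have hv' : (⟨i', x'⟩ : Phi34Conn.Vt g) ∉ Phi34Conn.intSet g := hv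
  obtain ⟨k, hk⟩ := (Phi34Conn.not_mem_intSet' g).mp hw'
  obtain ⟨k', hk'⟩ := (Phi34Conn.not_mem_intSet' g).mp hv'
  subst hk hk'
  show (Phi34Conn.L g).BdryAdj c ⟨i, Sum.inl (0, k)⟩ ⟨i', Sum.inl (0, k')⟩ ↔
    (⟨i', k'⟩ : Σ j : Fin b, ZMod (2 * g j + 1)) = ⟨i, canonicalσ (g i) c k⟩
  rw [Phi34Conn.bdryAdj_iff g c i k _ hv', Phi34Conn.sigma_pack g,
    Phi34Conn.endB_canonical g]
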